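/- Let X and Z be jointly distributed random variables on finite alphabets with X uniformly distributed on its alphabet. If P_c(X|Z) = P_c(X) (equivalently, Arimoto's mutual information of order ∞ satisfies I_∞(X;Z) = 0), then X and Z are independent. -/

import Mathlib

open Finset

/-- Proposition 1: let `(X, Z)` have joint pmf `P` on finite alphabets
(modeled as `Fin (M+1) × Fin (K+1)`) with `X` uniformly distributed. If
`P_c(X|Z) = P_c(X)` (equivalently `I_∞(X;Z) = 0`), then `X` and `Z` are independent. -/
theorem uniform_Iinfty_zero_implies_indep {M K : ℕ} (P : Fin (M + 1) → Fin (K + 1) → ℝ)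
    (hpos : ∀ x z, 0 ≤ P x z) (hsum : ∑ x, ∑ z, P x z = 1)
    (hunif : ∀ x, ∑ z, P x z = 1 / (M + 1))
    (h0 : (∑ z, ⨆ x, P x z) = ⨆ x, ∑ z, P x z) :
    ∀ x z, P x z = (∑ z', P x z') * (∑ x', P x' z) := by
  have hM : (0:ℝ) < M + 1 := by positivity
  set m : Fin (K+1) → ℝ := fun z => ⨆ x, P x z with hm
  have hle : ∀ x z, P x z ≤ m z := fun x z =>
    le_ciSup (f := fun x => P x z) (Set.Finite.bddAbove (Set.finite_range _)) x
  have hsup : (⨆ x : Fin (M+1), ∑ z, P x z) = 1/(M+1) := by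
    have : (fun x : Fin (M+1) => ∑ z, P x z) = fun _ => 1/((M:ℝ)+1) := funext hunif
    rw [this, ciSup_const]
  have h0' : ∑ z, m z = 1/(M+1) := by rw [hm]; simpa [hsup] using h0
  have hswap : ∑ z, ∑ x, P x z = 1 := by rw [Finset.sum_comm]; exact hsum
  have key : ∀ z, ∑ x, P x z = (M+1) * m z := by
    have hterm : ∀ z ∈ Finset.univ, 0 ≤ (M+1) * m z - ∑ x, P x z := by
      intro z _
      have h1 : ∑ x, P x z ≤ ∑ _x : Fin (M+1), m z :=
        Finset.sum_le_sum (fun x _ => hle x z)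
      rw [Finset.sum_const, Finset.card_univ, Fintype.card_fin, nsmul_eq_mul] at h1
      push_cast at h1
      linarith
    have hzero : ∑ z, ((M+1) * m z - ∑ x, P x z) = 0 := by
      rw [Finset.sum_sub_distrib, ← Finset.mul_sum, h0', hswap]
      field_simp
      ring
    intro z
    have := (Finset.sum_eq_zero_iff_of_nonneg hterm).mp hzero z (Finset.mem_univ z)
    linarith
  have keyx : ∀ x z, P x z = m z := by
    intro x z
    have hterm : ∀ x ∈ (Finset.univ : Finset (Fin (M+1))), 0 ≤ m z - P x z :=
      fun x _ => sub_nonneg.mpr (hle x z)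
    have hzero : ∑ x : Fin (M+1), (m z - P x z) = 0 := by
      rw [Finset.sum_sub_distrib, Finset.sum_const, Finset.card_univ, Fintype.card_fin,
        nsmul_eq_mul, key z]
      push_cast
      ring
    have := (Finset.sum_eq_zero_iff_of_nonneg hterm).mp hzero x (Finset.mem_univ x)
    linarith
  intro x z
  rw [hunif x, keyx x z, key z]
  field_simp
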